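/- Let K be a field, p, q, r ≥ 2 integers, L = L(p,q,r) the abelian group with generators x, y, z and relations p·x = q·y = r·z, and H = ℤ·z ≤ L. Grade the algebra S = K[X, Y, Z]/(X^p + Y^q + Z^r) by L via deg X = x, deg Y = y, deg Z = z. Then the subalgebra S_H = ⊕_{l ∈ H} S_l of elements whose homogeneous components have degrees in H equals K[X^p, Z] and is isomorphic as a K-algebra to a polynomial algebra in two variables. -/

import Mathlib

open MvPolynomial

/-- The abelian group `L(p,q,r)` with generators `x, y, z` and relations
`p•x = q•y = r•z`, realized as a quotient of `ℤ × ℤ × ℤ`. -/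
def LL (p q r : ℕ) : Type :=
  (ℤ × ℤ × ℤ) ⧸ (AddSubgroup.closure {((p : ℤ), -(q : ℤ), (0 : ℤ)), ((0 : ℤ), (q : ℤ), -(r : ℤ))})

noncomputable instance (p q r : ℕ) : AddCommGroup (LL p q r) :=
  QuotientAddGroup.Quotient.addCommGroup _

/-- The images of the three generators in `L(p,q,r)`. -/
def LLx (p q r : ℕ) : LL p q r := QuotientAddGroup.mk ((1 : ℤ), (0 : ℤ), (0 : ℤ))
def LLy (p q r : ℕ) : LL p q r := QuotientAddGroup.mk ((0 : ℤ), (1 : ℤ), (0 : ℤ))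
def LLz (p q r : ℕ) : LL p q r := QuotientAddGroup.mk ((0 : ℤ), (0 : ℤ), (1 : ℤ))

/-- The weights giving the `L(p,q,r)`-grading of `K[X,Y,Z]`:
`deg X = x`, `deg Y = y`, `deg Z = z`. -/
def LLw (p q r : ℕ) : Fin 3 → LL p q r := ![LLx p q r, LLy p q r, LLz p q r]

namespace Stmt12

variable {p q r : ℕ}

lemma LL_mk_eq_mk {a b : ℤ × ℤ × ℤ} :
    (QuotientAddGroup.mk a : LL p q r) = QuotientAddGroup.mk b ↔
      ∃ k m : ℤ, k • ((p:ℤ), -(q:ℤ), (0:ℤ)) + m • ((0:ℤ), (q:ℤ), -(r:ℤ)) = -a + b := by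
  rw [QuotientAddGroup.eq]
  exact AddSubgroup.mem_closure_pair ..

lemma LL_nsmul_mk (n : ℕ) (v : ℤ × ℤ × ℤ) :
    n • (QuotientAddGroup.mk v : LL p q r) = QuotientAddGroup.mk (n • v) :=
  (QuotientAddGroup.mk_nsmul _ v n)

lemma LL_zsmul_mk (n : ℤ) (v : ℤ × ℤ × ℤ) :
    n • (QuotientAddGroup.mk v : LL p q r) = QuotientAddGroup.mk (n • v) :=
  (QuotientAddGroup.mk_zsmul _ v n)

lemma LL_mk_add (u v : ℤ × ℤ × ℤ) :
    (QuotientAddGroup.mk u : LL p q r) + QuotientAddGroup.mk v = QuotientAddGroup.mk (u + v) :=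
  Eq.symm (QuotientAddGroup.mk_add _ u v)

lemma weight_eq (d : Fin 3 →₀ ℕ) :
    (Finsupp.weight (LLw p q r)) d =
      QuotientAddGroup.mk ((d 0 : ℤ), (d 1 : ℤ), (d 2 : ℤ)) := by
  rw [Finsupp.weight_apply, Finsupp.sum_fintype, Fin.sum_univ_three]
  case h => intro i; exact zero_smul ℕ _
  show d 0 • LLx p q r + d 1 • LLy p q r + d 2 • LLz p q r = _
  rw [show d 0 • LLx p q r = _ from LL_nsmul_mk (d 0) ((1:ℤ),(0:ℤ),(0:ℤ)),
    show d 1 • LLy p q r = _ from LL_nsmul_mk (d 1) ((0:ℤ),(1:ℤ),(0:ℤ)),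
    show d 2 • LLz p q r = _ from LL_nsmul_mk (d 2) ((0:ℤ),(0:ℤ),(1:ℤ))]
  refine (congrArg₂ (fun a b : LL p q r => a + b) (LL_mk_add _ _) rfl).trans ((LL_mk_add _ _).trans ?_)
  congr 1
  simp [Prod.ext_iff]


lemma dvd_of_weight_eq {d : Fin 3 →₀ ℕ} {n : ℤ}
    (h : (Finsupp.weight (LLw p q r)) d = n • LLz p q r) : p ∣ d 0 ∧ q ∣ d 1 := by
  rw [weight_eq, show n • LLz p q r = _ from LL_zsmul_mk n ((0:ℤ),(0:ℤ),(1:ℤ))] at h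
  replace h := LL_mk_eq_mk.mp h
  obtain ⟨k, m, hkm⟩ := h
  rw [Prod.ext_iff, Prod.ext_iff] at hkm
  simp only [Prod.smul_fst, Prod.smul_snd, Prod.fst_add, Prod.snd_add, smul_eq_mul,
    Prod.fst_neg, Prod.snd_neg, Prod.fst_add] at hkm
  obtain ⟨h1, h2, h3⟩ := hkm
  constructor
  · rw [← Int.natCast_dvd_natCast]
    exact ⟨-k, by linarith⟩
  · rw [← Int.natCast_dvd_natCast]
    exact ⟨k - m, by linarith⟩

lemma weight_X0_pow : (Finsupp.weight (LLw p q r)) (Finsupp.single 0 p) = (r : ℤ) • LLz p q r := by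
  rw [weight_eq, show (r : ℤ) • LLz p q r = _ from LL_zsmul_mk (r : ℤ) ((0:ℤ),(0:ℤ),(1:ℤ))]
  simp only [Finsupp.single_eq_same, Finsupp.single_eq_of_ne' (by decide : (0 : Fin 3) ≠ 1),
    Finsupp.single_eq_of_ne' (by decide : (0 : Fin 3) ≠ 2)]
  apply LL_mk_eq_mk.mpr
  exact ⟨-1, -1, by simp [Prod.ext_iff]⟩

lemma weight_X2 : (Finsupp.weight (LLw p q r)) (Finsupp.single 2 1) = (1 : ℤ) • LLz p q r := by
  rw [weight_eq, show (1 : ℤ) • LLz p q r = _ from LL_zsmul_mk (1 : ℤ) ((0:ℤ),(0:ℤ),(1:ℤ))]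
  simp [Finsupp.single_eq_of_ne' (by decide : (2 : Fin 3) ≠ 0),
    Finsupp.single_eq_of_ne' (by decide : (2 : Fin 3) ≠ 1)]
  rfl

variable (K : Type) [Field K] (p q r)

lemma indep (hp : 2 ≤ p) (hq : 2 ≤ q) :
    AlgebraicIndependent K
      ![Ideal.Quotient.mkₐ K (Ideal.span
          {(X 0 : MvPolynomial (Fin 3) K) ^ p + X 1 ^ q + X 2 ^ r}) (X 0) ^ p,
        Ideal.Quotient.mkₐ K (Ideal.span
          {(X 0 : MvPolynomial (Fin 3) K) ^ p + X 1 ^ q + X 2 ^ r}) (X 2)] := by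
  rw [algebraicIndependent_iff]
  intro f hf
  set w : MvPolynomial (Fin 3) K := X 0 ^ p + X 1 ^ q + X 2 ^ r with hw
  set π := Ideal.Quotient.mkₐ K (Ideal.span {w}) with hπ
  have hvec : (fun i => π (![X 0 ^ p, X 2] i)) = ![π (X 0) ^ p, π (X 2)] := by
    funext i; fin_cases i <;> simp
  have h1 : π (aeval ![X 0 ^ p, X 2] f) = 0 := by
    rw [comp_aeval_apply, hvec]; exact hf
  have h2 : w ∣ aeval ![X 0 ^ p, X 2] f := by
    rw [← Ideal.mem_span_singleton]
    rwa [hπ, Ideal.Quotient.mkₐ_eq_mk, Ideal.Quotient.eq_zero_iff_mem] at h1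
  -- push to Polynomial (MvPolynomial (Fin 2) K)
  set ψ : MvPolynomial (Fin 3) K →ₐ[K] Polynomial (MvPolynomial (Fin 2) K) :=
    aeval ![Polynomial.C (X 0), Polynomial.X, Polynomial.C (X 1)] with hψ
  have h3 : ψ w ∣ ψ (aeval ![X 0 ^ p, X 2] f) := map_dvd ψ h2
  have hψw : ψ w = Polynomial.X ^ q + Polynomial.C ((X 0 : MvPolynomial (Fin 2) K) ^ p + X 1 ^ r) := by
    rw [hw, hψ]
    simp only [map_add, map_pow, aeval_X]
    simp [Polynomial.C_pow, Polynomial.C_add]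
    ring
  have hψg : ψ (aeval ![X 0 ^ p, X 2] f) = Polynomial.C (aeval ![(X 0 : MvPolynomial (Fin 2) K) ^ p, X 1] f) := by
    rw [hψ, comp_aeval_apply,
      show Polynomial.C ((aeval ![(X 0 : MvPolynomial (Fin 2) K) ^ p, X 1]) f)
        = (Polynomial.CAlgHom (R := K)) ((aeval ![(X 0 : MvPolynomial (Fin 2) K) ^ p, X 1]) f)
        from rfl, comp_aeval_apply]
    exact congrArg (fun v => aeval v f) (by
      funext i; fin_cases i <;> simp [Polynomial.CAlgHom])
  rw [hψw, hψg] at h3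
  -- conclude the 2-variable evaluation vanishes
  have h4 : aeval ![(X 0 : MvPolynomial (Fin 2) K) ^ p, X 1] f = 0 := by
    by_contra hne
    have hmon : (Polynomial.X ^ q +
        Polynomial.C ((X 0 : MvPolynomial (Fin 2) K) ^ p + X 1 ^ r)).Monic := by
      apply Polynomial.monic_X_pow_add
      exact Polynomial.degree_C_le.trans_lt (by exact_mod_cast Nat.lt_of_lt_of_le Nat.zero_lt_two hq)
    have hle := Polynomial.natDegree_le_of_dvd h3 (by simpa using hne)
    rw [Polynomial.natDegree_X_pow_add_C, Polynomial.natDegree_C] at hle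
    omega
  -- now use expand to conclude f = 0
  set ε : MvPolynomial (Fin 2) K ≃ₐ[K] Polynomial (Polynomial K) :=
    (finSuccEquiv K 1).trans (Polynomial.mapAlgEquiv
      ((finSuccEquiv K 0).trans (Polynomial.mapAlgEquiv (isEmptyAlgEquiv K (Fin 0))))) with hε
  have hεX0 : ε (X 0) = Polynomial.X := by
    rw [hε]; simp [finSuccEquiv_X_zero, Polynomial.coe_mapAlgEquiv]
  have hεX1 : ε (X 1) = Polynomial.C Polynomial.X := by
    rw [hε]
    have : (X 1 : MvPolynomial (Fin 2) K) = X (Fin.succ 0) := rfl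
    rw [this]
    simp only [AlgEquiv.trans_apply, finSuccEquiv_X_zero, finSuccEquiv_X_succ,
      Polynomial.coe_mapAlgEquiv, Polynomial.map_C]
    congr 1
    simp [finSuccEquiv_X_zero, Polynomial.coe_mapAlgEquiv]
  have h4' : ε.toAlgHom ((aeval ![(X 0 : MvPolynomial (Fin 2) K) ^ p, X 1]) f) = 0 := by
    rw [h4, map_zero]
  rw [comp_aeval_apply] at h4'
  have hε1 : (fun i => ε.toAlgHom (![(X 0 : MvPolynomial (Fin 2) K) ^ p, X 1] i))
      = ![(Polynomial.X : Polynomial (Polynomial K)) ^ p, Polynomial.C Polynomial.X] := by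
    funext i
    fin_cases i <;>
      simp [map_pow, AlgEquiv.toAlgHom_eq_coe, AlgEquiv.coe_algHom, hεX0, hεX1]
  rw [hε1] at h4'
  have key : Polynomial.expand (Polynomial K) p
        (aeval ![(Polynomial.X : Polynomial (Polynomial K)), Polynomial.C Polynomial.X] f)
      = aeval ![(Polynomial.X : Polynomial (Polynomial K)) ^ p, Polynomial.C Polynomial.X] f := by
    rw [show (Polynomial.expand (Polynomial K) p)
          ((aeval ![(Polynomial.X : Polynomial (Polynomial K)), Polynomial.C Polynomial.X]) f)
        = (AlgHom.restrictScalars K (Polynomial.expand (Polynomial K) p))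
          ((aeval ![(Polynomial.X : Polynomial (Polynomial K)), Polynomial.C Polynomial.X]) f)
        from rfl, comp_aeval_apply]
    exact congrArg (fun v => aeval v f) (by
      funext i; fin_cases i <;> simp)
  have hz : aeval ![(Polynomial.X : Polynomial (Polynomial K)), Polynomial.C Polynomial.X] f = 0 := by
    apply Polynomial.expand_injective (show 0 < p by omega)
    rw [key, h4', map_zero]
  have hεf : ε.toAlgHom f = aeval ![(Polynomial.X : Polynomial (Polynomial K)), Polynomial.C Polynomial.X] f := by
    conv_lhs => rw [← aeval_X_left_apply (R := K) f]
    rw [comp_aeval_apply]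
    exact congrArg (fun v => aeval v f) (by
      funext i
      fin_cases i <;>
        simp [AlgEquiv.toAlgHom_eq_coe, AlgEquiv.coe_algHom, hεX0, hεX1])
  have h6 : ε f = 0 := by rw [show ε f = ε.toAlgHom f from rfl, hεf, hz]
  exact (map_eq_zero_iff ε ε.injective).mp h6

set_option maxHeartbeats 2000000 in
theorem stmt_12' (K : Type) [Field K] (p q r : ℕ) (hp : 2 ≤ p) (hq : 2 ≤ q) (hr : 2 ≤ r) :
    Submodule.map
        (Ideal.Quotient.mkₐ K (Ideal.span
          {(X 0 : MvPolynomial (Fin 3) K) ^ p + X 1 ^ q + X 2 ^ r})).toLinearMap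
        (⨆ l : AddSubgroup.zmultiples (LLz p q r),
          weightedHomogeneousSubmodule K (LLw p q r) (l : LL p q r)) =
      Subalgebra.toSubmodule (Algebra.adjoin K
        {Ideal.Quotient.mkₐ K (Ideal.span
          {(X 0 : MvPolynomial (Fin 3) K) ^ p + X 1 ^ q + X 2 ^ r}) (X 0) ^ p,
         Ideal.Quotient.mkₐ K (Ideal.span
          {(X 0 : MvPolynomial (Fin 3) K) ^ p + X 1 ^ q + X 2 ^ r}) (X 2)}) := by
  set w : MvPolynomial (Fin 3) K := X 0 ^ p + X 1 ^ q + X 2 ^ r with hw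
  set π := Ideal.Quotient.mkₐ K (Ideal.span {w}) with hπ
  set A := Algebra.adjoin K {π (X 0) ^ p, π (X 2)} with hA
  set T := ⨆ l : AddSubgroup.zmultiples (LLz p q r),
      weightedHomogeneousSubmodule K (LLw p q r) (l : LL p q r) with hT
  have hg0 : π (X 0) ^ p ∈ A := Algebra.subset_adjoin (by simp)
  have hg2 : π (X 2) ∈ A := Algebra.subset_adjoin (by simp)
  have hwmem : π w = 0 := by
    rw [hπ, Ideal.Quotient.mkₐ_eq_mk, Ideal.Quotient.eq_zero_iff_mem]
    exact Ideal.mem_span_singleton_self w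
  have hX1q : π (X 1) ^ q = -(π (X 0) ^ p + π (X 2) ^ r) := by
    have h' : π (X 0 ^ p + X 1 ^ q + X 2 ^ r) = 0 := hwmem
    simp only [map_add, map_pow] at h'
    linear_combination h'
  have hX1qA : π (X 1) ^ q ∈ A := by
    rw [hX1q]
    exact neg_mem (add_mem hg0 (pow_mem hg2 r))
  -- membership of suitable monomials
  have hmono : ∀ (d : Fin 3 →₀ ℕ) (c : K), p ∣ d 0 → q ∣ d 1 → π (monomial d c) ∈ A := by
    intro d c h0 h1
    obtain ⟨a, ha⟩ := h0
    obtain ⟨b, hb⟩ := h1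
    rw [monomial_eq, Finsupp.prod_fintype _ _ (fun i => pow_zero _), Fin.prod_univ_three]
    simp only [map_mul, map_pow]
    refine mul_mem ?_ (mul_mem (mul_mem ?_ ?_) ?_)
    · rw [show (C c : MvPolynomial (Fin 3) K) = algebraMap K _ c from rfl, AlgHom.commutes]
      exact algebraMap_mem A c
    · rw [ha, pow_mul]
      exact pow_mem hg0 a
    · rw [hb, pow_mul]
      exact pow_mem hX1qA b
    · exact pow_mem hg2 (d 2)
  -- X 0 ^ p and X 2 are in T
  have hX0T : (X 0 : MvPolynomial (Fin 3) K) ^ p ∈ T := by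
    rw [hT]
    refine Submodule.mem_iSup_of_mem
      ⟨(r : ℤ) • LLz p q r, AddSubgroup.mem_zmultiples_iff.mpr ⟨r, rfl⟩⟩ ?_
    rw [X_pow_eq_monomial]
    exact isWeightedHomogeneous_monomial _ _ _ weight_X0_pow
  have hX2T : (X 2 : MvPolynomial (Fin 3) K) ∈ T := by
    rw [hT]
    refine Submodule.mem_iSup_of_mem
      ⟨(1 : ℤ) • LLz p q r, AddSubgroup.mem_zmultiples_iff.mpr ⟨1, rfl⟩⟩ ?_
    exact isWeightedHomogeneous_monomial _ _ _ weight_X2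
  apply le_antisymm
  · -- map π T ≤ A
    rw [Submodule.map_le_iff_le_comap, hT]
    apply iSup_le
    rintro ⟨l, hl⟩
    intro f hf
    obtain ⟨n, hn⟩ := AddSubgroup.mem_zmultiples_iff.mp hl
    simp only [Submodule.mem_comap, AlgHom.toLinearMap_apply, Subalgebra.mem_toSubmodule]
    rw [show f = ∑ d ∈ f.support, monomial d (coeff d f) from (support_sum_monomial_coeff f).symm,
      map_sum]
    refine Subalgebra.sum_mem A fun d hd => ?_
    have hwd : (Finsupp.weight (LLw p q r)) d = n • LLz p q r := by
      rw [hn]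
      exact hf (mem_support_iff.mp hd)
    obtain ⟨h0, h1⟩ := dvd_of_weight_eq hwd
    exact hmono d _ h0 h1
  · -- A ≤ map π T
    have honeT : (1 : MvPolynomial (Fin 3) K) ∈ T := by
      rw [hT]
      refine Submodule.mem_iSup_of_mem ⟨0, AddSubgroup.zero_mem _⟩ ?_
      exact isWeightedHomogeneous_one K _
    have hmulT' : ∀ x ∈ T, ∀ y ∈ T, x * y ∈ T := by
      rw [hT]
      intro x hx
      refine Submodule.iSup_induction (motive := fun x => ∀ y ∈ T, x * y ∈ T) _ hx ?_ ?_ ?_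
      · rintro ⟨l₁, hl₁⟩ x₁ hx₁ y hy
        rw [hT] at hy ⊢
        refine Submodule.iSup_induction (motive := fun y => x₁ * y ∈ T) _ hy ?_ ?_ ?_
        · rintro ⟨l₂, hl₂⟩ y₁ hy₁
          rw [hT]
          refine Submodule.mem_iSup_of_mem ⟨l₁ + l₂, AddSubgroup.add_mem _ hl₁ hl₂⟩ ?_
          exact hx₁.mul hy₁
        · rw [hT] at honeT ⊢
          simpa using Submodule.zero_mem _
        · intro y₁ y₂ hy₁ hy₂
          rw [mul_add]
          rw [hT] at hy₁ hy₂ ⊢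
          exact Submodule.add_mem _ hy₁ hy₂
      · intro y hy
        simpa using Submodule.zero_mem _
      · intro x₁ x₂ hx₁ hx₂ y hy
        rw [add_mul]
        exact Submodule.add_mem _ (hx₁ y hy) (hx₂ y hy)
    set TA : Subalgebra K (MvPolynomial (Fin 3) K) :=
      T.toSubalgebra honeT (fun x y hx hy => hmulT' x hx y hy) with hTA
    have hsub : Subalgebra.toSubmodule (Subalgebra.map π TA) = Submodule.map π.toLinearMap T := by
      ext u
      simp only [Subalgebra.mem_toSubmodule, Subalgebra.mem_map, Submodule.mem_map,
        AlgHom.toLinearMap_apply]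
      rfl
    rw [← hsub]
    have : A ≤ Subalgebra.map π TA := by
      rw [hA]
      apply Algebra.adjoin_le
      rintro t (rfl | rfl)
      · exact ⟨X 0 ^ p, hX0T, by rw [map_pow]; rfl⟩
      · exact ⟨X 2, hX2T, rfl⟩
    exact fun u hu => this hu

end Stmt12

/-- let `S = K[X,Y,Z]/(X^p + Y^q + Z^r)` be graded by `L = L(p,q,r)`,
and `H = ℤ·z ≤ L`.  Then the subalgebra `S_H` of elements whose homogeneous
components have degrees in `H` equals `K[X^p, Z]`, and it is isomorphic as a
`K`-algebra to a polynomial algebra in two variables. -/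
theorem stmt_12 (K : Type) [Field K] (p q r : ℕ) (hp : 2 ≤ p) (hq : 2 ≤ q) (hr : 2 ≤ r) :
    Submodule.map
        (Ideal.Quotient.mkₐ K (Ideal.span
          {(X 0 : MvPolynomial (Fin 3) K) ^ p + X 1 ^ q + X 2 ^ r})).toLinearMap
        (⨆ l : AddSubgroup.zmultiples (LLz p q r),
          weightedHomogeneousSubmodule K (LLw p q r) (l : LL p q r)) =
      Subalgebra.toSubmodule (Algebra.adjoin K
        {Ideal.Quotient.mkₐ K (Ideal.span
          {(X 0 : MvPolynomial (Fin 3) K) ^ p + X 1 ^ q + X 2 ^ r}) (X 0) ^ p,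
         Ideal.Quotient.mkₐ K (Ideal.span
          {(X 0 : MvPolynomial (Fin 3) K) ^ p + X 1 ^ q + X 2 ^ r}) (X 2)}) ∧
    Nonempty ((Algebra.adjoin K
        {Ideal.Quotient.mkₐ K (Ideal.span
          {(X 0 : MvPolynomial (Fin 3) K) ^ p + X 1 ^ q + X 2 ^ r}) (X 0) ^ p,
         Ideal.Quotient.mkₐ K (Ideal.span
          {(X 0 : MvPolynomial (Fin 3) K) ^ p + X 1 ^ q + X 2 ^ r}) (X 2)}) ≃ₐ[K]
      MvPolynomial (Fin 2) K) := by
  refine ⟨Stmt12.stmt_12' K p q r hp hq hr, ?_⟩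
  have hind := Stmt12.indep (K := K) (p := p) (q := q) (r := r) hp hq
  have hrange : Set.range
      ![Ideal.Quotient.mkₐ K (Ideal.span
          {(X 0 : MvPolynomial (Fin 3) K) ^ p + X 1 ^ q + X 2 ^ r}) (X 0) ^ p,
        Ideal.Quotient.mkₐ K (Ideal.span
          {(X 0 : MvPolynomial (Fin 3) K) ^ p + X 1 ^ q + X 2 ^ r}) (X 2)] =
      {Ideal.Quotient.mkₐ K (Ideal.span
          {(X 0 : MvPolynomial (Fin 3) K) ^ p + X 1 ^ q + X 2 ^ r}) (X 0) ^ p,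
        Ideal.Quotient.mkₐ K (Ideal.span
          {(X 0 : MvPolynomial (Fin 3) K) ^ p + X 1 ^ q + X 2 ^ r}) (X 2)} := by
    ext t
    simp [Fin.exists_fin_two]
    tauto
  rw [← hrange]
  exact ⟨hind.aevalEquiv.symm⟩
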